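/- Let p be prime, k ≥ 0, and let Q(z) = Σ_{j=0}^{k} cⱼ z^{nⱼ} be a polynomial with nonzero complex coefficients cⱼ and exponents 0 ≤ n₀ < n₁ < ⋯ < n_k < p. Then Q has at most k zeroes among the p-th roots of unity. -/

import Mathlib

open MvPolynomial
namespace SparseAux
variable {m : ℕ}

/-- substitution X j ↦ X i -/
noncomputable def sub (i j : Fin m) : MvPolynomial (Fin m) ℤ →+* MvPolynomial (Fin m) ℤ :=
  (aeval (fun l => if l = j then X i else X l)).toRingHom

@[simp] lemma sub_X (i j l : Fin m) : sub i j (X l) = if l = j then X i else X l := by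
  simp [sub]

lemma sub_mem_span (i j : Fin m) (P : MvPolynomial (Fin m) ℤ) :
    P - sub i j P ∈ Ideal.span {(X j - X i : MvPolynomial (Fin m) ℤ)} := by
  induction P using MvPolynomial.induction_on with
  | C a => simp [sub]
  | add P Q hP hQ =>
      have : P + Q - sub i j (P + Q) = (P - sub i j P) + (Q - sub i j Q) := by
        rw [map_add]; ring
      rw [this]; exact Ideal.add_mem _ hP hQ
  | mul_X P l hP =>
      have : P * X l - sub i j (P * X l)
          = (P - sub i j P) * X l + sub i j P * (X l - sub i j (X l)) := by
        rw [map_mul]; ring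
      rw [this]
      refine Ideal.add_mem _ (Ideal.mul_mem_right _ _ hP) ?_
      rcases eq_or_ne l j with rfl | hl
      · rw [sub_X, if_pos rfl]
        exact Ideal.mul_mem_left _ _ (Ideal.subset_span rfl)
      · rw [sub_X, if_neg hl, sub_self, mul_zero]
        exact Ideal.zero_mem _

lemma dvd_iff_sub_eq_zero {i j : Fin m} (hij : i ≠ j) (P : MvPolynomial (Fin m) ℤ) :
    (X j - X i : MvPolynomial (Fin m) ℤ) ∣ P ↔ sub i j P = 0 := by
  constructor
  · rintro ⟨E, rfl⟩
    simp [sub, hij]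
  · intro h
    have := sub_mem_span i j P
    rw [h, sub_zero, Ideal.mem_span_singleton] at this
    exact this

lemma X_sub_X_ne_zero {i j : Fin m} (hij : i ≠ j) :
    (X j - X i : MvPolynomial (Fin m) ℤ) ≠ 0 := by
  intro h
  have := sub_eq_zero.mp h
  exact hij (X_injective this).symm

lemma prime_X_sub_X {i j : Fin m} (hij : i ≠ j) :
    Prime (X j - X i : MvPolynomial (Fin m) ℤ) := by
  refine ⟨X_sub_X_ne_zero hij, ?_, ?_⟩
  · intro hu
    have : IsUnit (sub i j (X j - X i)) := hu.map _
    simp [sub, hij] at this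
  · intro a b hab
    rw [dvd_iff_sub_eq_zero hij, map_mul, mul_eq_zero] at hab
    rcases hab with h | h
    · exact Or.inl ((dvd_iff_sub_eq_zero hij a).mpr h)
    · exact Or.inr ((dvd_iff_sub_eq_zero hij b).mpr h)

variable {m : ℕ}

lemma prod_dvd {R : Type*} [CommRing R] [IsDomain R] {ι : Type*} [DecidableEq ι]
    (s : Finset ι) (f : ι → R) :
    ∀ D : R, (∀ i ∈ s, Prime (f i)) →
      (∀ i ∈ s, ∀ j ∈ s, i ≠ j → ¬ f i ∣ f j) →
      (∀ i ∈ s, f i ∣ D) → (∏ i ∈ s, f i) ∣ D := by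
  induction s using Finset.induction_on with
  | empty => simp
  | @insert a s ha ih =>
    intro D hp hnd h
    obtain ⟨E, hE⟩ := h a (Finset.mem_insert_self a s)
    have hE' : ∀ i ∈ s, f i ∣ E := by
      intro i hi
      have hiD : f i ∣ f a * E := hE ▸ h i (Finset.mem_insert_of_mem hi)
      refine ((hp i (Finset.mem_insert_of_mem hi)).dvd_or_dvd hiD).resolve_left ?_
      exact hnd i (Finset.mem_insert_of_mem hi) a (Finset.mem_insert_self a s)
        (fun hia => ha (hia ▸ hi))
    rw [Finset.prod_insert ha, hE]
    exact mul_dvd_mul_left _ (ih E (fun i hi => hp i (Finset.mem_insert_of_mem hi))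
      (fun i hi j hj hij => hnd i (Finset.mem_insert_of_mem hi) j (Finset.mem_insert_of_mem hj) hij)
      hE')

/-- the set of ordered pairs -/
def PS (m : ℕ) : Finset (Fin m × Fin m) := Finset.univ.filter (fun q => q.1 < q.2)

lemma mem_PS {q : Fin m × Fin m} : q ∈ PS m ↔ q.1 < q.2 := by simp [PS]


lemma nodvd_pairs {q q' : Fin m × Fin m} (hq : q ∈ PS m) (hq' : q' ∈ PS m) (hne : q ≠ q') :
    ¬ (X q.2 - X q.1 : MvPolynomial (Fin m) ℤ) ∣ (X q'.2 - X q'.1) := by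
  rw [mem_PS] at hq hq'
  rw [dvd_iff_sub_eq_zero hq.ne]
  intro h
  rw [map_sub, sub_X, sub_X, sub_eq_zero] at h
  by_cases h2 : q'.2 = q.2
  · rw [if_pos h2] at h
    have h1 : q'.1 ≠ q.2 := fun e => absurd (e ▸ hq') (by rw [h2]; exact lt_irrefl _)
    rw [if_neg h1] at h
    have := X_injective h
    exact hne (Prod.ext this.symm (by rw [h2])).symm
  · rw [if_neg h2] at h
    by_cases h1 : q'.1 = q.2
    · rw [if_pos h1] at h
      have := X_injective h
      exact absurd (this ▸ hq.trans (h1 ▸ hq')) (lt_irrefl _)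
    · rw [if_neg h1] at h
      exact absurd (X_injective h) hq'.ne'

lemma prod_PS {β : Type*} [CommMonoid β] (f : Fin m × Fin m → β) :
    ∏ q ∈ PS m, f q = ∏ i : Fin m, ∏ j ∈ Finset.Ioi i, f (i, j) := by
  rw [PS, Finset.prod_filter, Fintype.prod_prod_type]
  refine Finset.prod_congr rfl (fun i _ => ?_)
  rw [← Finset.filter_lt_eq_Ioi, Finset.prod_filter]

noncomputable def Dmat (n : Fin m → ℕ) : Matrix (Fin m) (Fin m) (MvPolynomial (Fin m) ℤ) :=
  Matrix.of fun i j => X i ^ n j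

lemma V_dvd_det (n : Fin m → ℕ) :
    (∏ q ∈ PS m, (X q.2 - X q.1 : MvPolynomial (Fin m) ℤ)) ∣ (Dmat n).det := by
  refine prod_dvd _ _ _ (fun q hq => prime_X_sub_X (mem_PS.mp hq).ne)
    (fun q hq q' hq' hne => nodvd_pairs hq hq' hne) ?_
  intro q hq
  rw [dvd_iff_sub_eq_zero (mem_PS.mp hq).ne, RingHom.map_det]
  apply Matrix.det_zero_of_row_eq (mem_PS.mp hq).ne
  funext j
  simp [Dmat, sub, (mem_PS.mp hq).ne]

/-- specialization X i ↦ x ^ b i -/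
noncomputable def ψ (b : Fin m → ℕ) : MvPolynomial (Fin m) ℤ →+* Polynomial ℤ :=
  (aeval (fun i => Polynomial.X ^ b i)).toRingHom

@[simp] lemma ψ_X (b : Fin m → ℕ) (i : Fin m) : ψ b (X i) = Polynomial.X ^ b i := by simp [ψ]

lemma eval_one_ψ (b : Fin m → ℕ) (P : MvPolynomial (Fin m) ℤ) :
    (ψ b P).eval 1 = MvPolynomial.eval (fun _ => (1 : ℤ)) P := by
  have : (Polynomial.evalRingHom (1:ℤ)).comp (ψ b)
      = (MvPolynomial.eval (fun _ => (1:ℤ))) := by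
    apply MvPolynomial.ringHom_ext <;> simp [ψ]
  exact congrArg (fun f => f P) this |>.symm ▸ (RingHom.congr_fun this P)

lemma ψ_det (b n : Fin m → ℕ) :
    ψ b (Dmat n).det
      = (Matrix.of fun i j => (Polynomial.X : Polynomial ℤ) ^ (b i * n j)).det := by
  rw [RingHom.map_det]
  congr 1
  funext i j
  simp [Dmat, Matrix.map_apply, ← pow_mul]

lemma ψ_e_det (n : Fin m → ℕ) :
    ψ (fun i : Fin m => (i : ℕ)) (Dmat n).det
      = ∏ q ∈ PS m, ((Polynomial.X : Polynomial ℤ) ^ n q.2 - Polynomial.X ^ n q.1) := by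
  rw [ψ_det, prod_PS]
  have h : (Matrix.of fun i j : Fin m => (Polynomial.X : Polynomial ℤ) ^ ((i : ℕ) * n j))
      = Matrix.transpose (Matrix.vandermonde fun j : Fin m => (Polynomial.X : Polynomial ℤ) ^ n j) := by
    funext i j
    simp [Matrix.vandermonde, Matrix.transpose_apply, ← pow_mul, mul_comm]
  rw [h, Matrix.det_transpose, Matrix.det_vandermonde]

lemma ψ_V (b : Fin m → ℕ) :
    ψ b (∏ q ∈ PS m, (X q.2 - X q.1 : MvPolynomial (Fin m) ℤ))
      = ∏ q ∈ PS m, ((Polynomial.X : Polynomial ℤ) ^ b q.2 - Polynomial.X ^ b q.1) := by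
  rw [map_prod]
  exact Finset.prod_congr rfl fun q _ => by rw [map_sub, ψ_X, ψ_X]

/-- factor out (X-1) powers from a product of X^b - X^a -/
lemma factor_prod (b : Fin m → ℕ) (hb : ∀ q ∈ PS m, b q.1 < b q.2) :
    ∏ q ∈ PS m, ((Polynomial.X : Polynomial ℤ) ^ b q.2 - Polynomial.X ^ b q.1)
      = (Polynomial.X - 1) ^ (PS m).card *
        ∏ q ∈ PS m, (Polynomial.X ^ b q.1 *
          ∑ t ∈ Finset.range (b q.2 - b q.1), Polynomial.X ^ t) := by
  rw [← Finset.prod_const, ← Finset.prod_mul_distrib]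
  refine Finset.prod_congr rfl fun q hq => ?_
  have h1 : (Polynomial.X : Polynomial ℤ) ^ (b q.2 - b q.1) - 1
      = (∑ t ∈ Finset.range (b q.2 - b q.1), Polynomial.X ^ t) * (Polynomial.X - 1) :=
    (geom_sum_mul _ _).symm
  have h2 : b q.1 + (b q.2 - b q.1) = b q.2 := Nat.add_sub_cancel' (hb q hq).le
  calc (Polynomial.X : Polynomial ℤ) ^ b q.2 - Polynomial.X ^ b q.1
      = Polynomial.X ^ b q.1 * ((Polynomial.X : Polynomial ℤ) ^ (b q.2 - b q.1) - 1) := by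
        rw [mul_sub, mul_one, ← pow_add, h2]
    _ = _ := by rw [h1]; ring

lemma eval_one_factor (b : Fin m → ℕ) :
    Polynomial.eval (1 : ℤ) (∏ q ∈ PS m, ((Polynomial.X : Polynomial ℤ) ^ b q.1 *
        ∑ t ∈ Finset.range (b q.2 - b q.1), Polynomial.X ^ t))
      = ∏ q ∈ PS m, ((b q.2 - b q.1 : ℕ) : ℤ) := by
  rw [Polynomial.eval_prod]
  refine Finset.prod_congr rfl fun q _ => ?_
  simp [Polynomial.eval_finset_sum]

lemma Sval_eq (n : Fin m → ℕ) (hmono : ∀ q ∈ PS m, n q.1 < n q.2)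
    (S : MvPolynomial (Fin m) ℤ)
    (hS : (Dmat n).det = (∏ q ∈ PS m, (X q.2 - X q.1)) * S) :
    (∏ q ∈ PS m, ((n q.2 - n q.1 : ℕ) : ℤ))
      = (∏ q ∈ PS m, (((q.2 : ℕ) - (q.1 : ℕ) : ℕ) : ℤ)) *
        MvPolynomial.eval (fun _ => (1 : ℤ)) S := by
  have he : ∀ q ∈ PS m, ((q.1 : Fin m) : ℕ) < ((q.2 : Fin m) : ℕ) := fun q hq =>
    Fin.lt_iff_val_lt_val.mp (mem_PS.mp hq)
  have key := congrArg (ψ (fun i : Fin m => (i : ℕ))) hS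
  rw [ψ_e_det, map_mul, ψ_V, factor_prod _ hmono, factor_prod _ he, mul_assoc] at key
  have hX1 : ((Polynomial.X : Polynomial ℤ) - 1) ^ (PS m).card ≠ 0 := by
    apply pow_ne_zero
    have := Polynomial.X_sub_C_ne_zero (1 : ℤ)
    simpa using this
  have key2 := mul_left_cancel₀ hX1 key
  have := congrArg (Polynomial.eval (1 : ℤ)) key2
  rw [Polynomial.eval_mul, eval_one_factor, eval_one_factor, eval_one_ψ] at this
  exact this

lemma cheb (p : ℕ) (hp : p.Prime) (n : Fin m → ℕ)
    (hmono : ∀ q ∈ PS m, n q.1 < n q.2) (hnp : ∀ j, n j < p)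
    (ζ : ℂ) (hζ : IsPrimitiveRoot ζ p) (a : Fin m → ℕ)
    (hdist : Function.Injective fun i => ζ ^ a i) :
    (Matrix.of fun i j => (ζ ^ a i) ^ n j : Matrix (Fin m) (Fin m) ℂ).det ≠ 0 := by
  haveI : Fact p.Prime := ⟨hp⟩
  obtain ⟨S, hS⟩ := V_dvd_det (m := m) n
  -- the evaluation hom to ℂ
  set χ : Polynomial ℤ →+* ℂ := (Polynomial.aeval ζ).toRingHom with hχ
  have hdet : (Matrix.of fun i j => (ζ ^ a i) ^ n j : Matrix (Fin m) (Fin m) ℂ).det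
      = χ (ψ a (Dmat n).det) := by
    rw [RingHom.map_det, RingHom.map_det]
    congr 1
    funext i j
    simp [Dmat, Matrix.map_apply, ψ, hχ, ← pow_mul]
  have hV : χ (ψ a (∏ q ∈ PS m, (X q.2 - X q.1 : MvPolynomial (Fin m) ℤ))) ≠ 0 := by
    rw [ψ_V, map_prod]
    apply Finset.prod_ne_zero_iff.mpr
    intro q hq
    have h1 : χ ((Polynomial.X : Polynomial ℤ) ^ a q.2 - Polynomial.X ^ a q.1)
        = ζ ^ a q.2 - ζ ^ a q.1 := by simp [hχ]
    rw [h1, sub_ne_zero]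
    intro h
    exact (mem_PS.mp hq).ne' (hdist h)
  intro h0
  rw [hdet, hS, map_mul, map_mul, mul_eq_zero] at h0
  have hSz : χ (ψ a S) = 0 := h0.resolve_left hV
  -- minimal polynomial argument
  have hint : IsIntegral ℤ ζ := hζ.isIntegral hp.pos
  have haev : (Polynomial.aeval ζ) (ψ a S) = 0 := hSz
  have hdvd : minpoly ℤ ζ ∣ ψ a S := minpoly.isIntegrallyClosed_dvd hint haev
  rw [← Polynomial.cyclotomic_eq_minpoly hζ hp.pos] at hdvd
  have hdvd1 : ((p : ℤ)) ∣ (ψ a S).eval 1 := by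
    have := Polynomial.eval_dvd (x := (1 : ℤ)) hdvd
    rwa [Polynomial.eval_one_cyclotomic_prime] at this
  rw [eval_one_ψ] at hdvd1
  -- but the Schur value at 1 is not divisible by p
  have hval := Sval_eq n hmono S hS
  have hpP : Prime ((p : ℤ)) := Int.prime_iff_natAbs_prime.mpr (by simpa using hp)
  have hnd : ¬ ((p : ℤ)) ∣ ∏ q ∈ PS m, ((n q.2 - n q.1 : ℕ) : ℤ) := by
    refine hpP.not_dvd_finset_prod ?_
    intro q hq
    rw [Int.natCast_dvd_natCast]
    intro hdq
    have h1 : 0 < n q.2 - n q.1 := Nat.sub_pos_of_lt (hmono q hq)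
    have h2 : n q.2 - n q.1 < p := lt_of_le_of_lt (Nat.sub_le _ _) (hnp q.2)
    exact absurd (Nat.le_of_dvd h1 hdq) (not_le.mpr h2)
  exact hnd (hval ▸ Dvd.dvd.mul_left hdvd1 _)

end SparseAux

open Complex Finset

theorem sparse_poly_few_roots_of_unity
    (p : ℕ) (hp : p.Prime) (k : ℕ)
    (c : Fin (k + 1) → ℂ) (hc : ∀ j, c j ≠ 0)
    (n : Fin (k + 1) → ℕ) (hn : StrictMono n) (hnp : ∀ j, n j < p)
    (Q : Polynomial ℂ) (hQ : Q = ∑ j : Fin (k + 1), Polynomial.C (c j) * Polynomial.X ^ (n j)) :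
    {z : ℂ | z ^ p = 1 ∧ Q.eval z = 0}.ncard ≤ k := by
  classical
  by_contra hcon
  push_neg at hcon
  set Z := {z : ℂ | z ^ p = 1 ∧ Q.eval z = 0} with hZ
  have hZfin : Z.Finite := by
    refine Set.Finite.subset (Polynomial.nthRootsFinset p (1 : ℂ)).finite_toSet ?_
    intro z hz
    rw [Finset.mem_coe, Polynomial.mem_nthRootsFinset hp.pos (1 : ℂ)]
    exact hz.1
  obtain ⟨t, hts, htcard⟩ := Set.exists_subset_card_eq (Nat.succ_le_of_lt hcon)
  have htfin : t.Finite := hZfin.subset hts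
  haveI := htfin.fintype
  have hcardt : Fintype.card t = k + 1 := by
    rw [← Set.toFinset_card, ← Set.ncard_eq_toFinset_card', htcard]
  let e := Fintype.equivFinOfCardEq hcardt
  set z : Fin (k + 1) → ℂ := fun i => ((e.symm i : t) : ℂ) with hz
  have hzinj : Function.Injective z := fun i j h => e.symm.injective (Subtype.ext h)
  have hzZ : ∀ i, z i ∈ Z := fun i => hts (e.symm i).2
  haveI : NeZero p := ⟨hp.ne_zero⟩
  have hζ := Complex.isPrimitiveRoot_exp p hp.ne_zero
  choose a ha1 ha2 using fun i => hζ.eq_pow_of_pow_eq_one (hzZ i).1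
  have hza : (fun i => Complex.exp (2 * Real.pi * Complex.I / p) ^ a i) = z := funext ha2
  set M : Matrix (Fin (k + 1)) (Fin (k + 1)) ℂ := Matrix.of fun i j => z i ^ n j with hM
  have hdet0 : M.det = 0 := by
    rw [← Matrix.exists_mulVec_eq_zero_iff]
    refine ⟨c, fun h => hc 0 (congrFun h 0), ?_⟩
    funext i
    have h0 := (hzZ i).2
    rw [hQ, Polynomial.eval_finset_sum] at h0
    simp only [Polynomial.eval_mul, Polynomial.eval_C, Polynomial.eval_pow,
      Polynomial.eval_X] at h0
    simpa [hM, Matrix.mulVec, dotProduct, mul_comm] using h0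
  refine SparseAux.cheb p hp n (fun q hq => hn (SparseAux.mem_PS.mp hq)) hnp _ hζ a ?_ ?_
  · rw [hza]; exact hzinj
  · rw [show (Matrix.of fun i j => (Complex.exp (2 * Real.pi * Complex.I / p) ^ a i) ^ n j)
        = M by rw [hM]; funext i j; simp only [Matrix.of_apply]; rw [ha2 i]]
    exact hdet0
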